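/- For all integers m, n ≥ 2 and all i, j ∈ {1,2}, P_{i,j}(T, m×n) = ⋃_{k,l∈{0,2}} Q_{i+k,j+l}(T, m×n), and the four sets Q_{i+k,j+l}(T, m×n) for k,l∈{0,2} are non-empty and pairwise disjoint. -/

import Mathlib

/-- The 16-letter alphabet 𝒜 = {A,…,P}. -/
inductive A16 : Type
  | A | B | C | D | E | F | G | H | I | J | K | L | M | N | O | P
  deriving DecidableEq

/-- The 2×2 block substitution μ on 𝒜 (rows top to bottom). -/
def mu : A16 → Fin 2 → Fin 2 → A16
  | .A => ![![.A, .F], ![.G, .C]]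
  | .B => ![![.A, .F], ![.H, .D]]
  | .C => ![![.B, .E], ![.G, .C]]
  | .D => ![![.B, .E], ![.H, .D]]
  | .E => ![![.A, .N], ![.G, .K]]
  | .F => ![![.A, .N], ![.H, .L]]
  | .G => ![![.B, .M], ![.G, .K]]
  | .H => ![![.B, .M], ![.H, .L]]
  | .I => ![![.I, .F], ![.O, .C]]
  | .J => ![![.I, .F], ![.P, .D]]
  | .K => ![![.J, .E], ![.O, .C]]
  | .L => ![![.J, .E], ![.P, .D]]
  | .M => ![![.I, .N], ![.O, .K]]
  | .N => ![![.I, .N], ![.P, .L]]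
  | .O => ![![.J, .M], ![.O, .K]]
  | .P => ![![.J, .M], ![.P, .L]]

/-- Entry version of μ, indexed by arbitrary naturals (via mod 2). -/
def muE (x : A16) (r c : ℕ) : A16 :=
  mu x ⟨r % 2, by omega⟩ ⟨c % 2, by omega⟩

/-- `superE n x` is the supertile μⁿ(x), a 2ⁿ×2ⁿ array over 𝒜,
given as a total function on ℕ × ℕ (only indices < 2ⁿ are relevant). -/
def superE : ℕ → A16 → ℕ → ℕ → A16
  | 0, x, _, _ => x
  | n + 1, x, r, c => muE (superE n x (r / 2) (c / 2)) r c

/-- The supertile T_k = μᵏ(N). -/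
def Tfun (k : ℕ) : ℕ → ℕ → A16 := superE k .N

/-- An m×n pattern over the alphabet α. -/
abbrev Pat (α : Type) (m n : ℕ) := Fin m → Fin n → α

/-- The set of m×n patterns occurring in the size×size array X. -/
def patIn {α : Type} (X : ℕ → ℕ → α) (size m n : ℕ) : Set (Pat α m n) :=
  { p | ∃ r c : ℕ, r + m ≤ size ∧ c + n ≤ size ∧
      ∀ (i : Fin m) (j : Fin n), p i j = X (r + i) (c + j) }

/-- P(T, m×n) = ⋃ₖ P(T_k, m×n). -/
def PT (m n : ℕ) : Set (Pat A16 m n) := ⋃ k : ℕ, patIn (Tfun k) (2 ^ k) m n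

/-- μ applied to an m×n pattern, as a total 2m×2n array on ℕ × ℕ
(indices are reduced mod the valid range; in range this is exactly μ(p)). -/
def muPatE {m n : ℕ} (p : Pat A16 m n) (r c : ℕ) : A16 :=
  if hm : 0 < m then
    if hn : 0 < n then
      muE (p ⟨r / 2 % m, Nat.mod_lt _ hm⟩ ⟨c / 2 % n, Nat.mod_lt _ hn⟩) r c
    else .A
  else .A

/-- μ² applied to an m×n pattern, as a total 4m×4n array on ℕ × ℕ. -/
def mu2PatE {m n : ℕ} (p : Pat A16 m n) (r c : ℕ) : A16 :=
  muE (muPatE p (r / 2) (c / 2)) r c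

/-- P_{i,j}(T, m×n) = { μ(x)[i,j,m×n] : x ∈ P(T,m×n) } (1-based corner (i,j)). -/
def Pij (i j m n : ℕ) : Set (Pat A16 m n) :=
  { q | ∃ x ∈ PT m n, ∀ (a : Fin m) (b : Fin n),
      q a b = muPatE x (i - 1 + a) (j - 1 + b) }

/-- Q_{i,j}(T, m×n) = { μ²(x)[i,j,m×n] : x ∈ P(T,m×n) } (1-based corner (i,j)). -/
def Qij (i j m n : ℕ) : Set (Pat A16 m n) :=
  { q | ∃ x ∈ PT m n, ∀ (a : Fin m) (b : Fin n),
      q a b = mu2PatE x (i - 1 + a) (j - 1 + b) }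

/-- The 2×2 block substitution φ from 𝒜 to ℬ = {0,1,2,3}. -/
def phi : A16 → Fin 2 → Fin 2 → Fin 4
  | .A => ![![0, 1], ![0, 0]]
  | .B => ![![0, 1], ![1, 1]]
  | .C => ![![1, 0], ![0, 0]]
  | .D => ![![1, 0], ![1, 1]]
  | .E => ![![0, 3], ![0, 2]]
  | .F => ![![0, 3], ![1, 3]]
  | .G => ![![1, 2], ![0, 2]]
  | .H => ![![1, 2], ![1, 3]]
  | .I => ![![2, 1], ![2, 0]]
  | .J => ![![2, 1], ![3, 1]]
  | .K => ![![3, 0], ![2, 0]]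
  | .L => ![![3, 0], ![3, 1]]
  | .M => ![![2, 3], ![2, 2]]
  | .N => ![![2, 3], ![3, 3]]
  | .O => ![![3, 2], ![2, 2]]
  | .P => ![![3, 2], ![3, 3]]

/-- Entry version of φ, indexed by arbitrary naturals (via mod 2). -/
def phiE (x : A16) (r c : ℕ) : Fin 4 :=
  phi x ⟨r % 2, by omega⟩ ⟨c % 2, by omega⟩

/-- φ applied to an m×n pattern over 𝒜, as a total 2m×2n array on ℕ × ℕ. -/
def phiPatE {m n : ℕ} (p : Pat A16 m n) (r c : ℕ) : Fin 4 :=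
  if hm : 0 < m then
    if hn : 0 < n then
      phiE (p ⟨r / 2 % m, Nat.mod_lt _ hm⟩ ⟨c / 2 % n, Nat.mod_lt _ hn⟩) r c
    else 0
  else 0

/-- φ(T_k), a 2^(k+1)×2^(k+1) array over ℬ. -/
def Sfun (k : ℕ) (r c : ℕ) : Fin 4 := phiE (Tfun k (r / 2) (c / 2)) r c

/-- P(S, m×n) = ⋃_{k≥1} P(φ(T_{k-1}), m×n). -/
def PS (m n : ℕ) : Set (Pat (Fin 4) m n) :=
  ⋃ k : ℕ, patIn (Sfun k) (2 ^ (k + 1)) m n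

/-- P_{i,j}(S, m×n) = { φ(x)[i,j,m×n] : x ∈ P(T,m×n) } (1-based corner (i,j)). -/
def PSij (i j m n : ℕ) : Set (Pat (Fin 4) m n) :=
  { q | ∃ x ∈ PT m n, ∀ (a : Fin m) (b : Fin n),
      q a b = phiPatE x (i - 1 + a) (j - 1 + b) }

/-- A_n = |P(S, n×n)|. -/
noncomputable def Acnt (n : ℕ) : ℕ := Nat.card (PS n n)

/-- a_{i,j}(n) = |P_{i,j}(T, n×n)|. -/
noncomputable def aT (i j n : ℕ) : ℕ := Nat.card (Pij i j n n)

/-- b_{i,j}(n) = |P_{i,j}(T, n×(n+1))|. -/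
noncomputable def bT (i j n : ℕ) : ℕ := Nat.card (Pij i j n (n + 1))

/-- c_{i,j}(n) = |P_{i,j}(T, (n+1)×n)|. -/
noncomputable def cT (i j n : ℕ) : ℕ := Nat.card (Pij i j (n + 1) n)

def r00 : A16 → ℕ | .B => 1 | .J => 1 | _ => 0
def c01 : A16 → ℕ | .E => 1 | .N => 1 | _ => 0

lemma muE_congr (w : A16) (r c r' c' : ℕ) (hr : r % 2 = r' % 2) (hc : c % 2 = c' % 2) :
    muE w r c = muE w r' c' := by
  unfold muE
  congr 1 <;> exact Fin.ext (by simpa using by omega)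

lemma key_r (w : A16) (t s : ℕ) : r00 (muE (muE w t s) 0 0) = t % 2 := by
  unfold muE
  rcases Nat.mod_two_eq_zero_or_one t with h | h <;>
    rcases Nat.mod_two_eq_zero_or_one s with h' | h' <;>
      simp only [h, h'] <;> cases w <;> rfl

lemma key_c (w : A16) (t s : ℕ) : c01 (muE (muE w t s) 0 1) = s % 2 := by
  unfold muE
  rcases Nat.mod_two_eq_zero_or_one t with h | h <;>
    rcases Nat.mod_two_eq_zero_or_one s with h' | h' <;>
      simp only [h, h'] <;> cases w <;> rfl

lemma Tfun_succ (K r c : ℕ) : Tfun (K+1) r c = muE (Tfun K (r/2) (c/2)) r c := rfl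

lemma Tfun_step (K r c u v : ℕ) :
    Tfun (K+1) (2*r + u) (2*c + v) = muE (Tfun K (r + u/2) (c + v/2)) u v := by
  rw [Tfun_succ, show (2*r+u)/2 = r + u/2 from by omega,
      show (2*c+v)/2 = c + v/2 from by omega]
  exact muE_congr _ _ _ _ _ (by omega) (by omega)

lemma embed : ∀ j a b : ℕ, a < 2^j → b < 2^j →
    Tfun (j+3) (2^(j+2) + a) (3 * 2^j + b) = Tfun j a b := by
  intro j
  induction j with
  | zero =>
    intro a b ha hb
    interval_cases a <;> interval_cases b <;> rfl
  | succ j ih =>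
    intro a b ha hb
    have hp : (2:ℕ)^(j+1) = 2*2^j := by ring
    have hp2 : (2:ℕ)^(j+2) = 4*2^j := by ring
    have hp2' : (2:ℕ)^(j+1+2) = 8*2^j := by ring
    rw [show j+1+3 = (j+3)+1 from rfl, Tfun_succ,
        show (2^(j+1+2) + a)/2 = 2^(j+2) + a/2 from by omega,
        show (3*2^(j+1) + b)/2 = 3*2^j + b/2 from by omega,
        ih (a/2) (b/2) (by omega) (by omega)]
    rw [Tfun_succ]
    exact muE_congr _ _ _ _ _ (by omega) (by omega)

lemma muPatE_eq' {m n : ℕ} (hm : 0 < m) (hn : 0 < n) (p : Pat A16 m n) (r c : ℕ)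
    (hr : r/2 < m) (hc : c/2 < n) :
    muPatE p r c = muE (p ⟨r/2, hr⟩ ⟨c/2, hc⟩) r c := by
  unfold muPatE
  rw [dif_pos hm, dif_pos hn]
  congr 2 <;> exact Fin.ext (by simp [Nat.mod_eq_of_lt, hr, hc])

lemma PT_nonempty (m n : ℕ) : (PT m n).Nonempty := by
  refine ⟨fun a b => Tfun (m+n) (0 + (a:ℕ)) (0 + (b:ℕ)), Set.mem_iUnion.2 ⟨m+n, 0, 0, ?_, ?_, fun a b => rfl⟩⟩
  · have := Nat.lt_two_pow_self (n := m+n); omega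
  · have := Nat.lt_two_pow_self (n := m+n); omega

lemma Q_inv_r {m n : ℕ} (hm : 2 ≤ m) (hn : 2 ≤ n) (x : Pat A16 m n)
    {i j k l : ℕ} (hi1 : 1 ≤ i) (hi2 : i ≤ 2) (hj1 : 1 ≤ j) (hj2 : j ≤ 2)
    (hk : k % 2 = 0) (hk2 : k ≤ 2) (hl : l % 2 = 0) (hl2 : l ≤ 2) :
    r00 (mu2PatE x (i+k-1+(i-1)) (j+l-1+(j-1))) = (i-1+k/2) % 2 := by
  show r00 (muE (muPatE x ((i+k-1+(i-1))/2) ((j+l-1+(j-1))/2)) _ _) = _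
  rw [muPatE_eq' (by omega) (by omega) x _ _ (by omega) (by omega)]
  rw [muE_congr _ (i+k-1+(i-1)) (j+l-1+(j-1)) 0 0 (by omega) (by omega), key_r]
  omega

lemma Q_inv_c {m n : ℕ} (hm : 2 ≤ m) (hn : 2 ≤ n) (x : Pat A16 m n)
    {i j k l : ℕ} (hi1 : 1 ≤ i) (hi2 : i ≤ 2) (hj1 : 1 ≤ j) (hj2 : j ≤ 2)
    (hk : k % 2 = 0) (hk2 : k ≤ 2) (hl : l % 2 = 0) (hl2 : l ≤ 2) :
    c01 (mu2PatE x (i+k-1+(i-1)) (j+l-1+(2-j))) = l/2 := by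
  show c01 (muE (muPatE x ((i+k-1+(i-1))/2) ((j+l-1+(2-j))/2)) _ _) = _
  rw [muPatE_eq' (by omega) (by omega) x _ _ (by omega) (by omega)]
  rw [muE_congr _ (i+k-1+(i-1)) (j+l-1+(2-j)) 0 1 (by omega) (by omega), key_c]
  omega

lemma Q_subset_P {m n : ℕ} (hm : 2 ≤ m) (hn : 2 ≤ n) {i j k l : ℕ}
    (hi1 : 1 ≤ i) (hi2 : i ≤ 2) (hj1 : 1 ≤ j) (hj2 : j ≤ 2)
    (hk : k % 2 = 0) (hk2 : k ≤ 2) (hl : l % 2 = 0) (hl2 : l ≤ 2) :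
    Qij (i+k) (j+l) m n ⊆ Pij i j m n := by
  rintro q ⟨x, hxPT, hx⟩
  simp only [PT, Set.mem_iUnion] at hxPT
  obtain ⟨K, r, c, hr, hc, hT⟩ := hxPT
  have hp : (2:ℕ)^(K+1) = 2*2^K := by ring
  refine ⟨fun a b => muPatE x (k/2 + (a:ℕ)) (l/2 + (b:ℕ)), ?_, ?_⟩
  · refine Set.mem_iUnion.2 ⟨K+1, 2*r + k/2, 2*c + l/2, by omega, by omega, ?_⟩
    intro a b
    have ha := a.isLt; have hb := b.isLt
    show muPatE x (k/2 + (a:ℕ)) (l/2 + (b:ℕ)) = Tfun (K+1) (2*r + k/2 + (a:ℕ)) (2*c + l/2 + (b:ℕ))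
    rw [muPatE_eq' (by omega) (by omega) x _ _ (by omega : (k/2+(a:ℕ))/2 < m) (by omega : (l/2+(b:ℕ))/2 < n), hT]
    simp only [Fin.val_mk]
    rw [show 2*r + k/2 + (a:ℕ) = 2*r + (k/2 + (a:ℕ)) from by omega,
        show 2*c + l/2 + (b:ℕ) = 2*c + (l/2 + (b:ℕ)) from by omega,
        Tfun_step]
  · intro a b
    have ha := a.isLt; have hb := b.isLt
    rw [hx a b]
    calc mu2PatE x (i+k-1+(a:ℕ)) (j+l-1+(b:ℕ))
        = muE (muPatE x ((i+k-1+(a:ℕ))/2) ((j+l-1+(b:ℕ))/2)) (i+k-1+(a:ℕ)) (j+l-1+(b:ℕ)) := rfl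
      _ = muE (muPatE x (k/2 + (i-1+(a:ℕ))/2) (l/2 + (j-1+(b:ℕ))/2)) (i-1+(a:ℕ)) (j-1+(b:ℕ)) := by
          rw [show (i+k-1+(a:ℕ))/2 = k/2 + (i-1+(a:ℕ))/2 from by omega,
              show (j+l-1+(b:ℕ))/2 = l/2 + (j-1+(b:ℕ))/2 from by omega]
          exact muE_congr _ _ _ _ _ (by omega) (by omega)
      _ = muPatE (fun (a : Fin m) (b : Fin n) => muPatE x (k/2 + (a:ℕ)) (l/2 + (b:ℕ))) (i-1+(a:ℕ)) (j-1+(b:ℕ)) := by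
          exact (muPatE_eq' (by omega) (by omega)
            (fun (a : Fin m) (b : Fin n) => muPatE x (k/2 + (a:ℕ)) (l/2 + (b:ℕ))) _ _
            (by omega : (i-1+(a:ℕ))/2 < m) (by omega : (j-1+(b:ℕ))/2 < n)).symm

lemma P_subset_Q {m n : ℕ} (hm : 2 ≤ m) (hn : 2 ≤ n) {i j : ℕ}
    (hi1 : 1 ≤ i) (hi2 : i ≤ 2) (hj1 : 1 ≤ j) (hj2 : j ≤ 2) :
    Pij i j m n ⊆ ⋃ k ∈ ({0, 2} : Set ℕ), ⋃ l ∈ ({0, 2} : Set ℕ), Qij (i + k) (j + l) m n := by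
  rintro q ⟨y, hyPT, hy⟩
  simp only [PT, Set.mem_iUnion] at hyPT
  obtain ⟨K, r, c, hr, hc, hT⟩ := hyPT
  obtain ⟨K', rfl⟩ : ∃ K', K = K' + 1 := by
    cases K with
    | zero => exfalso; simp at hr; omega
    | succ t => exact ⟨t, rfl⟩
  have hp : (2:ℕ)^(K'+1) = 2*2^K' := by ring
  have hp2 : (2:ℕ)^(K'+2) = 4*2^K' := by ring
  have hp3 : (2:ℕ)^(K'+3) = 8*2^K' := by ring
  refine Set.mem_iUnion₂.2 ⟨2*(r%2), by rcases Nat.mod_two_eq_zero_or_one r with h|h <;> simp [h], ?_⟩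
  refine Set.mem_iUnion₂.2 ⟨2*(c%2), by rcases Nat.mod_two_eq_zero_or_one c with h|h <;> simp [h], ?_⟩
  refine ⟨fun a b => Tfun (K'+3) (2^(K'+2) + (r/2 + (a:ℕ))) (3*2^K' + (c/2 + (b:ℕ))), ?_, ?_⟩
  · refine Set.mem_iUnion.2 ⟨K'+3, 2^(K'+2) + r/2, 3*2^K' + c/2, by omega, by omega, ?_⟩
    intro a b
    show Tfun (K'+3) (2^(K'+2) + (r/2 + (a:ℕ))) (3*2^K' + (c/2 + (b:ℕ))) = _
    rw [Nat.add_assoc, Nat.add_assoc]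
  · intro a b
    have ha := a.isLt; have hb := b.isLt
    have h1 : (i-1+(a:ℕ))/2 < m := by omega
    have h2 : (j-1+(b:ℕ))/2 < n := by omega
    have hU2 : (i + 2*(r%2) - 1 + (a:ℕ))/2/2 < m := by omega
    have hV2 : (j + 2*(c%2) - 1 + (b:ℕ))/2/2 < n := by omega
    rw [hy a b]
    have hL : muPatE y (i-1+(a:ℕ)) (j-1+(b:ℕ)) =
        muE (muE (Tfun K' ((r+(i-1+(a:ℕ))/2)/2) ((c+(j-1+(b:ℕ))/2)/2))
          (r+(i-1+(a:ℕ))/2) (c+(j-1+(b:ℕ))/2)) (i-1+(a:ℕ)) (j-1+(b:ℕ)) := by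
      rw [muPatE_eq' (by omega) (by omega) y _ _ h1 h2, hT]
      rfl
    rw [hL]
    show _ = muE (muPatE _ ((i + 2*(r%2) - 1 + (a:ℕ))/2) ((j + 2*(c%2) - 1 + (b:ℕ))/2))
        (i + 2*(r%2) - 1 + (a:ℕ)) (j + 2*(c%2) - 1 + (b:ℕ))
    rw [muPatE_eq' (by omega) (by omega) _ _ _ hU2 hV2]
    show _ = muE (muE (Tfun (K'+3)
        (2^(K'+2) + (r/2 + (i + 2*(r%2) - 1 + (a:ℕ))/2/2))
        (3*2^K' + (c/2 + (j + 2*(c%2) - 1 + (b:ℕ))/2/2)))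
        ((i + 2*(r%2) - 1 + (a:ℕ))/2) ((j + 2*(c%2) - 1 + (b:ℕ))/2))
        (i + 2*(r%2) - 1 + (a:ℕ)) (j + 2*(c%2) - 1 + (b:ℕ))
    rw [embed K' _ _ (by omega) (by omega)]
    rw [show r/2 + (i + 2*(r%2) - 1 + (a:ℕ))/2/2 = (r + (i-1+(a:ℕ))/2)/2 from by omega,
        show c/2 + (j + 2*(c%2) - 1 + (b:ℕ))/2/2 = (c + (j-1+(b:ℕ))/2)/2 from by omega]
    rw [muE_congr _ ((i + 2*(r%2) - 1 + (a:ℕ))/2) ((j + 2*(c%2) - 1 + (b:ℕ))/2)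
          (r + (i-1+(a:ℕ))/2) (c + (j-1+(b:ℕ))/2) (by omega) (by omega)]
    rw [muE_congr _ (i + 2*(r%2) - 1 + (a:ℕ)) (j + 2*(c%2) - 1 + (b:ℕ))
          (i-1+(a:ℕ)) (j-1+(b:ℕ)) (by omega) (by omega)]

/-- Lemma 3.9: for m, n ≥ 2 and i, j ∈ {1,2}, P_{i,j}(T, m×n) is the union of
the sets Q_{i+k,j+l}(T, m×n) for k,l ∈ {0,2}, which are non-empty and
pairwise disjoint. -/
theorem disjoint_Qij (m n : ℕ) (hm : 2 ≤ m) (hn : 2 ≤ n)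
    (i j : ℕ) (hi : i ∈ ({1, 2} : Set ℕ)) (hj : j ∈ ({1, 2} : Set ℕ)) :
    (Pij i j m n =
        ⋃ k ∈ ({0, 2} : Set ℕ), ⋃ l ∈ ({0, 2} : Set ℕ), Qij (i + k) (j + l) m n) ∧
    (∀ k ∈ ({0, 2} : Set ℕ), ∀ l ∈ ({0, 2} : Set ℕ),
        (Qij (i + k) (j + l) m n).Nonempty) ∧
    (∀ k ∈ ({0, 2} : Set ℕ), ∀ l ∈ ({0, 2} : Set ℕ),
      ∀ k' ∈ ({0, 2} : Set ℕ), ∀ l' ∈ ({0, 2} : Set ℕ),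
        (k, l) ≠ (k', l') →
          Disjoint (Qij (i + k) (j + l) m n) (Qij (i + k') (j + l') m n)) := by
  simp only [Set.mem_insert_iff, Set.mem_singleton_iff] at hi hj
  have hi1 : 1 ≤ i := by rcases hi with rfl | rfl <;> omega
  have hi2 : i ≤ 2 := by rcases hi with rfl | rfl <;> omega
  have hj1 : 1 ≤ j := by rcases hj with rfl | rfl <;> omega
  have hj2 : j ≤ 2 := by rcases hj with rfl | rfl <;> omega
  have hbnd : ∀ k : ℕ, k = 0 ∨ k = 2 → k % 2 = 0 ∧ k ≤ 2 := by rintro k (rfl | rfl) <;> omega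
  refine ⟨?_, ?_, ?_⟩
  · apply Set.Subset.antisymm
    · exact P_subset_Q hm hn hi1 hi2 hj1 hj2
    · intro q hq
      simp only [Set.mem_iUnion, Set.mem_insert_iff, Set.mem_singleton_iff] at hq
      obtain ⟨k, hk, l, hl, hq⟩ := hq
      exact Q_subset_P hm hn hi1 hi2 hj1 hj2 (hbnd k hk).1 (hbnd k hk).2 (hbnd l hl).1 (hbnd l hl).2 hq
  · intro k hk l hl
    obtain ⟨x, hx⟩ := PT_nonempty m n
    exact ⟨fun a b => mu2PatE x (i + k - 1 + (a:ℕ)) (j + l - 1 + (b:ℕ)), x, hx, fun a b => rfl⟩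
  · intro k hk l hl k' hk' l' hl' hne
    simp only [Set.mem_insert_iff, Set.mem_singleton_iff] at hk hl hk' hl'
    rw [Set.disjoint_left]
    rintro q ⟨x, -, hx⟩ ⟨x', -, hx'⟩
    have hk1 := (hbnd k hk).1; have hk2 := (hbnd k hk).2
    have hl1 := (hbnd l hl).1; have hl2 := (hbnd l hl).2
    have hk1' := (hbnd k' hk').1; have hk2' := (hbnd k' hk').2
    have hl1' := (hbnd l' hl').1; have hl2' := (hbnd l' hl').2
    have e1 : r00 (q ⟨i-1, by omega⟩ ⟨j-1, by omega⟩) = (i-1+k/2) % 2 := by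
      rw [hx ⟨i-1, by omega⟩ ⟨j-1, by omega⟩]
      exact Q_inv_r hm hn x hi1 hi2 hj1 hj2 hk1 hk2 hl1 hl2
    have e1' : r00 (q ⟨i-1, by omega⟩ ⟨j-1, by omega⟩) = (i-1+k'/2) % 2 := by
      rw [hx' ⟨i-1, by omega⟩ ⟨j-1, by omega⟩]
      exact Q_inv_r hm hn x' hi1 hi2 hj1 hj2 hk1' hk2' hl1' hl2'
    have e2 : c01 (q ⟨i-1, by omega⟩ ⟨2-j, by omega⟩) = l/2 := by
      rw [hx ⟨i-1, by omega⟩ ⟨2-j, by omega⟩]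
      exact Q_inv_c hm hn x hi1 hi2 hj1 hj2 hk1 hk2 hl1 hl2
    have e2' : c01 (q ⟨i-1, by omega⟩ ⟨2-j, by omega⟩) = l'/2 := by
      rw [hx' ⟨i-1, by omega⟩ ⟨2-j, by omega⟩]
      exact Q_inv_c hm hn x' hi1 hi2 hj1 hj2 hk1' hk2' hl1' hl2'
    have : k = k' ∧ l = l' := by omega
    exact hne (by simp [Prod.ext_iff, this.1, this.2])
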